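/- Let s ∈ ℝ and C = {(x,y) ∈ ℝ² : x ≥ 0 and y ≤ s·x}. If Γ ⊆ ℝ² contains (0,0), is contained in C, and is a 1-dimensional topological submanifold of ℝ², then Γ is not a differentiable (C¹) 1-dimensional submanifold of ℝ² at the point (0,0). -/

import Mathlib

/-- `Γ` is a 1-dimensional topological submanifold of `ℝ²`: around each of its points
there is a local homeomorphism of `ℝ²` sending `Γ` onto the horizontal axis. -/
def IsTopSubmanifold1D (Γ : Set (ℝ × ℝ)) : Prop :=
  ∀ z ∈ Γ, ∃ e : PartialHomeomorph (ℝ × ℝ) (ℝ × ℝ),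
    z ∈ e.source ∧ e '' (e.source ∩ Γ) = e.target ∩ {p : ℝ × ℝ | p.2 = 0}

theorem stmt_1 (s : ℝ) (Γ : Set (ℝ × ℝ))
    (h0 : ((0 : ℝ), (0 : ℝ)) ∈ Γ)
    (hΓC : Γ ⊆ {p : ℝ × ℝ | 0 ≤ p.1 ∧ p.2 ≤ s * p.1})
    (hman : IsTopSubmanifold1D Γ) :
    ¬ ∃ (U V : Set (ℝ × ℝ)) (Φ Ψ : ℝ × ℝ → ℝ × ℝ),
      IsOpen U ∧ IsOpen V ∧ ((0 : ℝ), (0 : ℝ)) ∈ U ∧ ((0 : ℝ), (0 : ℝ)) ∈ V ∧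
      ContDiffOn ℝ 1 Φ U ∧ ContDiffOn ℝ 1 Ψ V ∧
      Φ '' U = V ∧ (∀ x ∈ U, Ψ (Φ x) = x) ∧ (∀ y ∈ V, Φ (Ψ y) = y) ∧
      Φ ((0 : ℝ), (0 : ℝ)) = ((0 : ℝ), (0 : ℝ)) ∧
      Φ '' (U ∩ Γ) = V ∩ {p : ℝ × ℝ | p.2 = 0} := by
  rintro ⟨U, V, Φ, Ψ, hU, hV, h0U, h0V, hΦ, hΨ, hΦU, hΨΦ, hΦΨ, hΦ0, hΦΓ⟩
  -- Ψ fixes the origin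
  have hΨ0 : Ψ ((0:ℝ), (0:ℝ)) = ((0:ℝ), (0:ℝ)) := by
    have h := hΨΦ _ h0U
    rwa [hΦ0] at h
  -- differentiability at the origin
  have hΨd : DifferentiableAt ℝ Ψ ((0:ℝ), (0:ℝ)) :=
    ((hΨ.differentiableOn one_ne_zero) _ h0V).differentiableAt (hV.mem_nhds h0V)
  have hΦd : DifferentiableAt ℝ Φ ((0:ℝ), (0:ℝ)) :=
    ((hΦ.differentiableOn one_ne_zero) _ h0U).differentiableAt (hU.mem_nhds h0U)
  set B := fderiv ℝ Ψ ((0:ℝ), (0:ℝ)) with hB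
  set A := fderiv ℝ Φ ((0:ℝ), (0:ℝ)) with hA
  -- eventually, Ψ (t, 0) ∈ Γ
  have hc : Continuous (fun t : ℝ => ((t, 0) : ℝ × ℝ)) :=
    continuous_id.prodMk continuous_const
  have hmemV : ∀ᶠ t : ℝ in nhds 0, ((t, 0) : ℝ × ℝ) ∈ V :=
    hc.continuousAt.preimage_mem_nhds (by simpa using hV.mem_nhds h0V)
  have hmem : ∀ᶠ t : ℝ in nhds 0, Ψ (t, 0) ∈ Γ := by
    filter_upwards [hmemV] with t htV
    have himg : ((t, 0) : ℝ × ℝ) ∈ Φ '' (U ∩ Γ) := by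
      rw [hΦΓ]; exact ⟨htV, rfl⟩
    obtain ⟨u, hu, hΦu⟩ := himg
    have h := hΨΦ u hu.1
    rw [hΦu] at h
    rw [h]; exact hu.2
  -- derivative of γ(t) = Ψ (t, 0)
  have hline : HasDerivAt (fun t : ℝ => ((t, 0) : ℝ × ℝ)) ((1 : ℝ), (0 : ℝ)) 0 :=
    (hasDerivAt_id 0).prodMk (hasDerivAt_const 0 0)
  have hγ : HasDerivAt (fun t : ℝ => Ψ (t, 0)) (B ((1:ℝ), (0:ℝ))) 0 := by
    have := hΨd.hasFDerivAt.comp_hasDerivAt_of_eq 0 hline rfl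
    simpa [Function.comp_def] using this
  have hγ1 : HasDerivAt (fun t : ℝ => (Ψ (t, 0)).1) (B ((1:ℝ), (0:ℝ))).1 0 := by
    have := (ContinuousLinearMap.fst ℝ ℝ ℝ).hasFDerivAt.comp_hasDerivAt 0 hγ.hasFDerivAt.hasDerivAt
    simpa [Function.comp_def] using this
  have hγ2 : HasDerivAt (fun t : ℝ => (Ψ (t, 0)).2) (B ((1:ℝ), (0:ℝ))).2 0 := by
    have := (ContinuousLinearMap.snd ℝ ℝ ℝ).hasFDerivAt.comp_hasDerivAt 0 hγ.hasFDerivAt.hasDerivAt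
    simpa [Function.comp_def] using this
  -- first coordinate has a local min at 0
  have hmin1 : IsLocalMin (fun t : ℝ => (Ψ (t, 0)).1) 0 := by
    filter_upwards [hmem] with t ht
    simpa [← Prod.mk_zero_zero, hΨ0] using (hΓC ht).1
  have hv1 : (B ((1:ℝ), (0:ℝ))).1 = 0 := hmin1.hasDerivAt_eq_zero hγ1
  -- s * x - y has a local min at 0 along γ
  have hmin2 : IsLocalMin (fun t : ℝ => s * (Ψ (t, 0)).1 - (Ψ (t, 0)).2) 0 := by
    filter_upwards [hmem] with t ht
    have := (hΓC ht).2
    simp only [← Prod.mk_zero_zero, hΨ0]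
    nlinarith [this]
  have hg : HasDerivAt (fun t : ℝ => s * (Ψ (t, 0)).1 - (Ψ (t, 0)).2)
      (s * (B ((1:ℝ), (0:ℝ))).1 - (B ((1:ℝ), (0:ℝ))).2) 0 :=
    (hγ1.const_mul s).sub hγ2
  have hv2 : (B ((1:ℝ), (0:ℝ))).2 = 0 := by
    have h := hmin2.hasDerivAt_eq_zero hg
    rw [hv1] at h; linarith
  have hvB : B ((1:ℝ), (0:ℝ)) = 0 := Prod.ext hv1 hv2
  -- but A ∘ B = id, so B (1,0) ≠ 0
  have hid : HasFDerivAt (Φ ∘ Ψ) (A.comp B) ((0:ℝ), (0:ℝ)) := by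
    have hA' : HasFDerivAt Φ A (Ψ ((0:ℝ), (0:ℝ))) := by
      rw [hΨ0]; exact hΦd.hasFDerivAt
    exact hA'.comp _ hΨd.hasFDerivAt
  have heq : (Φ ∘ Ψ) =ᶠ[nhds ((0:ℝ), (0:ℝ))] id := by
    filter_upwards [hV.mem_nhds h0V] with y hy
    exact hΦΨ y hy
  have hid' : HasFDerivAt id (A.comp B) ((0:ℝ), (0:ℝ)) := hid.congr_of_eventuallyEq heq.symm
  have huniq : A.comp B = ContinuousLinearMap.id ℝ (ℝ × ℝ) := by
    have h1 := hid'.fderiv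
    rw [fderiv_id] at h1
    exact h1.symm
  have : ((1:ℝ), (0:ℝ)) = ((0:ℝ), (0:ℝ)) := by
    have h1 : A (B ((1:ℝ), (0:ℝ))) = ((1:ℝ), (0:ℝ)) := by
      have := congrArg (fun (L : (ℝ × ℝ) →L[ℝ] (ℝ × ℝ)) => L ((1:ℝ), (0:ℝ))) huniq
      simpa using this
    rw [hvB] at h1
    simpa using h1.symm
  simp at this
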